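/- arXiv:2604.27034 — 2 statements merged into one kernel-verified Lean document; each statement's English description precedes it below -/
import Mathlib

section
/- Let ρ be a nonzero positive semidefinite complex matrix indexed by Fin m × Fin n whose partial transpose ρ^Γ is also positive semidefinite. Let P and Q be the orthogonal projections onto ker ρ and ker ρ^Γ respectively, and set W = P + Q^Γ. Assume there exist no nonzero x ∈ ℂ^m and nonzero y ∈ ℂ^n such that P·(x⊗y) = 0 and Q·(x⊗conj(y)) = 0 (the edge condition). Then δ := min over ‖x‖ = ‖y‖ = 1 of (x⊗y)ᴴ W (x⊗y) is strictly positive, and for every ε with 0 < ε ≤ δ: (a) (x⊗y)ᴴ (W − ε·I) (x⊗y) ≥ 0 for all x, y; and (b) there do not exist positive semidefinite matrices Q' and R' with W − ε·I = Q' + R'^Γ. -/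
open Matrix
open scoped ComplexOrder

/-- Kronecker product vector: `(x ⊗ y)_{(i,k)} = x i * y k`. -/
noncomputable def kron {m n : ℕ} (x : Fin m → ℂ) (y : Fin n → ℂ) : Fin m × Fin n → ℂ :=
  fun ik => x ik.1 * y ik.2

/-- The biquadratic form `p_W(x,y) = (x⊗y)ᴴ W (x⊗y)`. -/
noncomputable def bqf {m n : ℕ} (W : Matrix (Fin m × Fin n) (Fin m × Fin n) ℂ)
    (x : Fin m → ℂ) (y : Fin n → ℂ) : ℂ :=
  star (kron x y) ⬝ᵥ (W *ᵥ kron x y)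

/-- Partial transpose (on the second factor): `(W^Γ)_{(i,k),(j,l)} = W_{(i,l),(j,k)}`. -/
noncomputable def pt {m n : ℕ} (W : Matrix (Fin m × Fin n) (Fin m × Fin n) ℂ) :
    Matrix (Fin m × Fin n) (Fin m × Fin n) ℂ :=
  Matrix.of fun p q => W (p.1, q.2) (q.1, p.2)

def swapE (m n : ℕ) : ((Fin m × Fin n) × (Fin m × Fin n)) ≃ ((Fin m × Fin n) × (Fin m × Fin n)) where
  toFun pq := ((pq.1.1, pq.2.2), (pq.2.1, pq.1.2))
  invFun pq := ((pq.1.1, pq.2.2), (pq.2.1, pq.1.2))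
  left_inv := fun _ => rfl
  right_inv := fun _ => rfl

lemma bqf_pt {m n : ℕ} (Q : Matrix (Fin m × Fin n) (Fin m × Fin n) ℂ)
    (x : Fin m → ℂ) (y : Fin n → ℂ) :
    bqf (pt Q) x y = star (kron x (star y)) ⬝ᵥ (Q *ᵥ kron x (star y)) := by
  simp only [bqf, dotProduct, mulVec, pt, kron, of_apply, Pi.star_apply, Finset.mul_sum]
  rw [← Fintype.sum_prod_type', ← Fintype.sum_prod_type']
  refine Fintype.sum_equiv (swapE m n) _ _ fun pq => ?_
  simp only [swapE, Equiv.coe_fn_mk, star_mul', star_star]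
  ring

lemma trace_pt_mul {m n : ℕ} (A B : Matrix (Fin m × Fin n) (Fin m × Fin n) ℂ) :
    (pt A * B).trace = (A * pt B).trace := by
  simp only [Matrix.trace, Matrix.diag, Matrix.mul_apply, pt, of_apply]
  rw [← Fintype.sum_prod_type', ← Fintype.sum_prod_type']
  exact Fintype.sum_equiv (swapE m n) _ _ fun pq => rfl

lemma proj_quad {ι : Type*} [Fintype ι] [DecidableEq ι] (P : Matrix ι ι ℂ)
    (hH : P.IsHermitian) (hI : P * P = P) (v : ι → ℂ) :
    star v ⬝ᵥ (P *ᵥ v) = star (P *ᵥ v) ⬝ᵥ (P *ᵥ v) := by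
  conv_lhs => rw [← hI, ← mulVec_mulVec, dotProduct_mulVec]
  rw [star_mulVec, hH.eq]

lemma star_dot {ι : Type*} [Fintype ι] (u : ι → ℂ) :
    star u ⬝ᵥ u = ((∑ i, Complex.normSq (u i) : ℝ) : ℂ) := by
  rw [Complex.ofReal_sum]
  simp [dotProduct, Complex.normSq_eq_conj_mul_self]

lemma psd_trace_nonneg {ι : Type*} [Fintype ι] [DecidableEq ι] {A : Matrix ι ι ℂ}
    (hA : A.PosSemidef) : 0 ≤ A.trace := by
  apply Finset.sum_nonneg
  intro i _
  simpa [dotProduct, Pi.single_apply] using hA.dotProduct_mulVec_nonneg (Pi.single i 1)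

open scoped MatrixOrder in
lemma psd_mul_trace_nonneg {ι : Type*} [Fintype ι] [DecidableEq ι]
    {A B : Matrix ι ι ℂ} (hA : A.PosSemidef) (hB : B.PosSemidef) :
    0 ≤ (A * B).trace := by
  have h1 : (((CFC.sqrt B))ᴴ * A * (CFC.sqrt B)).PosSemidef := hA.conjTranspose_mul_mul_same _
  have h2 := psd_trace_nonneg h1
  have h3 : (((CFC.sqrt B))ᴴ * A * (CFC.sqrt B)).trace = (A * B).trace := by
    rw [Matrix.mul_assoc, trace_mul_comm, Matrix.mul_assoc, (CFC.sqrt_nonneg B).posSemidef.1.eq,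
      CFC.sqrt_mul_sqrt_self B hB.nonneg]
  rwa [h3] at h2

lemma psd_trace_pos {ι : Type*} [Fintype ι] [DecidableEq ι] {A : Matrix ι ι ℂ}
    (hA : A.PosSemidef) (hne : A ≠ 0) : 0 < A.trace := by
  refine lt_of_le_of_ne (psd_trace_nonneg hA) (Ne.symm fun h => hne ?_)
  exact hA.trace_eq_zero_iff.mp h

noncomputable def Sval {m n : ℕ} (P Q : Matrix (Fin m × Fin n) (Fin m × Fin n) ℂ)
    (x : Fin m → ℂ) (y : Fin n → ℂ) : ℝ :=
  (∑ i, Complex.normSq ((P *ᵥ kron x y) i)) + ∑ i, Complex.normSq ((Q *ᵥ kron x (star y)) i)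

lemma Sval_nonneg {m n : ℕ} (P Q : Matrix (Fin m × Fin n) (Fin m × Fin n) ℂ)
    (x : Fin m → ℂ) (y : Fin n → ℂ) : 0 ≤ Sval P Q x y :=
  add_nonneg (Finset.sum_nonneg fun _ _ => Complex.normSq_nonneg _)
    (Finset.sum_nonneg fun _ _ => Complex.normSq_nonneg _)

lemma bqf_eq {m n : ℕ} (P Q : Matrix (Fin m × Fin n) (Fin m × Fin n) ℂ)
    (hP1 : P.IsHermitian) (hP2 : P * P = P) (hQ1 : Q.IsHermitian) (hQ2 : Q * Q = Q)
    (x : Fin m → ℂ) (y : Fin n → ℂ) :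
    bqf (P + pt Q) x y = ((Sval P Q x y : ℝ) : ℂ) := by
  have h1 : bqf (P + pt Q) x y
      = star (kron x y) ⬝ᵥ (P *ᵥ kron x y) + bqf (pt Q) x y := by
    simp [bqf, add_mulVec, dotProduct_add]
  rw [h1, bqf_pt, proj_quad P hP1 hP2, proj_quad Q hQ1 hQ2, star_dot, star_dot, Sval,
    Complex.ofReal_add]

lemma sum_normSq_smul {ι : Type*} [Fintype ι] (a : ℂ) (u : ι → ℂ) :
    ∑ i, Complex.normSq ((a • u) i) = Complex.normSq a * ∑ i, Complex.normSq (u i) := by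
  rw [Finset.mul_sum]
  simp [Complex.normSq_mul]

lemma kron_smul_smul {m n : ℕ} (c d : ℂ) (x : Fin m → ℂ) (y : Fin n → ℂ) :
    kron (c • x) (d • y) = (c * d) • kron x y := by
  funext p
  simp only [kron, Pi.smul_apply, smul_eq_mul]
  ring

lemma Sval_smul {m n : ℕ} (P Q : Matrix (Fin m × Fin n) (Fin m × Fin n) ℂ)
    (c d : ℂ) (x : Fin m → ℂ) (y : Fin n → ℂ) :
    Sval P Q (c • x) (d • y) = Complex.normSq c * Complex.normSq d * Sval P Q x y := by
  unfold Sval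
  rw [kron_smul_smul, show kron (c • x) (star (d • y)) = (c * star d) • kron x (star y) from by
    rw [star_smul]; exact kron_smul_smul c (star d) x (star y)]
  rw [mulVec_smul, mulVec_smul, sum_normSq_smul, sum_normSq_smul,
    Complex.normSq_mul, Complex.normSq_mul]
  simp only [Complex.normSq_conj, RCLike.star_def]
  ring

lemma sum_normSq_kron {m n : ℕ} (x : Fin m → ℂ) (y : Fin n → ℂ) :
    ∑ p : Fin m × Fin n, Complex.normSq (kron x y p)
      = (∑ i, Complex.normSq (x i)) * (∑ k, Complex.normSq (y k)) := by
  rw [Fintype.sum_prod_type, Finset.sum_mul_sum]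
  simp [kron, Complex.normSq_mul]

lemma sum_normSq_eq_zero {ι : Type*} [Fintype ι] {u : ι → ℂ}
    (h : ∑ i, Complex.normSq (u i) = 0) : u = 0 := by
  funext i
  have := (Finset.sum_eq_zero_iff_of_nonneg (fun j _ => Complex.normSq_nonneg (u j))).mp h i
    (Finset.mem_univ _)
  simpa using Complex.normSq_eq_zero.mp this

theorem stmt_8 (m n : ℕ) (ρ : Matrix (Fin m × Fin n) (Fin m × Fin n) ℂ)
    (hρne : ρ ≠ 0) (hρ : ρ.PosSemidef) (hρΓ : (pt ρ).PosSemidef)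
    (P Q : Matrix (Fin m × Fin n) (Fin m × Fin n) ℂ)
    (hP : P.IsHermitian ∧ P * P = P ∧ ∀ v : Fin m × Fin n → ℂ, P *ᵥ v = v ↔ ρ *ᵥ v = 0)
    (hQ : Q.IsHermitian ∧ Q * Q = Q ∧ ∀ v : Fin m × Fin n → ℂ, Q *ᵥ v = v ↔ (pt ρ) *ᵥ v = 0)
    (hedge : ¬ ∃ (x : Fin m → ℂ) (y : Fin n → ℂ), x ≠ 0 ∧ y ≠ 0 ∧
      P *ᵥ kron x y = 0 ∧ Q *ᵥ kron x (star y) = 0)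
    (δ : ℝ)
    (hδ : IsLeast {r : ℝ | ∃ (x : Fin m → ℂ) (y : Fin n → ℂ),
      (∑ i, Complex.normSq (x i)) = 1 ∧ (∑ k, Complex.normSq (y k)) = 1 ∧
        bqf (P + pt Q) x y = (r : ℂ)} δ) :
    0 < δ ∧ ∀ ε : ℝ, 0 < ε → ε ≤ δ →
      (∀ (x : Fin m → ℂ) (y : Fin n → ℂ), 0 ≤ bqf (P + pt Q - (ε : ℂ) • 1) x y) ∧
      ¬ ∃ Q' R' : Matrix (Fin m × Fin n) (Fin m × Fin n) ℂ,
          Q'.PosSemidef ∧ R'.PosSemidef ∧ P + pt Q - (ε : ℂ) • 1 = Q' + pt R' := by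
  obtain ⟨hP1, hP2, hP3⟩ := hP
  obtain ⟨hQ1, hQ2, hQ3⟩ := hQ
  have hbqf : ∀ x y, bqf (P + pt Q) x y = ((Sval P Q x y : ℝ) : ℂ) :=
    bqf_eq P Q hP1 hP2 hQ1 hQ2
  -- positivity of δ
  obtain ⟨x₀, y₀, hx₀, hy₀, hb₀⟩ := hδ.1
  have hδS : δ = Sval P Q x₀ y₀ := by
    rw [hbqf] at hb₀
    exact_mod_cast hb₀.symm
  have hx₀ne : x₀ ≠ 0 := by
    intro h; rw [h] at hx₀; simp at hx₀
  have hy₀ne : y₀ ≠ 0 := by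
    intro h; rw [h] at hy₀; simp at hy₀
  have hδpos : 0 < δ := by
    refine lt_of_le_of_ne (hδS ▸ Sval_nonneg P Q x₀ y₀) (Ne.symm fun h0 => hedge ?_)
    have hS0 : Sval P Q x₀ y₀ = 0 := by rw [← hδS, h0]
    have hle1 : (0:ℝ) ≤ ∑ i, Complex.normSq ((P *ᵥ kron x₀ y₀) i) :=
      Finset.sum_nonneg fun _ _ => Complex.normSq_nonneg _
    have hle2 : (0:ℝ) ≤ ∑ i, Complex.normSq ((Q *ᵥ kron x₀ (star y₀)) i) :=
      Finset.sum_nonneg fun _ _ => Complex.normSq_nonneg _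
    unfold Sval at hS0
    exact ⟨x₀, y₀, hx₀ne, hy₀ne, sum_normSq_eq_zero (by linarith),
      sum_normSq_eq_zero (by linarith)⟩
  refine ⟨hδpos, fun ε hε hεδ => ⟨?_, ?_⟩⟩
  · -- part (a)
    intro x y
    have hexp : bqf (P + pt Q - (ε:ℂ) • 1) x y
        = ((Sval P Q x y
            - ε * ((∑ i, Complex.normSq (x i)) * (∑ k, Complex.normSq (y k))) : ℝ) : ℂ) := by
      have h1 : bqf (P + pt Q - (ε:ℂ) • 1) x y
          = bqf (P + pt Q) x y - (ε:ℂ) * (star (kron x y) ⬝ᵥ kron x y) := by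
        simp [bqf, sub_mulVec, dotProduct_sub, smul_mulVec, one_mulVec, smul_eq_mul]
      rw [h1, hbqf, star_dot, sum_normSq_kron]
      push_cast
      ring
    rw [hexp, Complex.zero_le_real, sub_nonneg]
    rcases eq_or_ne x 0 with rfl | hx
    · have hk : kron (0 : Fin m → ℂ) y = 0 := funext fun p => by simp [kron]
      have hk' : kron (0 : Fin m → ℂ) (star y) = 0 := funext fun p => by simp [kron]
      simp [Sval, hk, hk']
    rcases eq_or_ne y 0 with rfl | hy
    · have hk : kron x (0 : Fin n → ℂ) = 0 := funext fun p => by simp [kron]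
      have hk' : kron x (star (0 : Fin n → ℂ)) = 0 := funext fun p => by simp [kron]
      simp [Sval, hk, hk']
    set Nx := ∑ i, Complex.normSq (x i) with hNxdef
    set Ny := ∑ k, Complex.normSq (y k) with hNydef
    have hNx : 0 < Nx := lt_of_le_of_ne (Finset.sum_nonneg fun _ _ => Complex.normSq_nonneg _)
      (Ne.symm fun h => hx (sum_normSq_eq_zero (by rw [← hNxdef]; exact h)))
    have hNy : 0 < Ny := lt_of_le_of_ne (Finset.sum_nonneg fun _ _ => Complex.normSq_nonneg _)
      (Ne.symm fun h => hy (sum_normSq_eq_zero (by rw [← hNydef]; exact h)))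
    set c : ℂ := (((Real.sqrt Nx)⁻¹ : ℝ) : ℂ) with hcdef
    set d : ℂ := (((Real.sqrt Ny)⁻¹ : ℝ) : ℂ) with hddef
    have hc : Complex.normSq c = Nx⁻¹ := by
      rw [hcdef, Complex.normSq_ofReal, ← mul_inv, Real.mul_self_sqrt hNx.le]
    have hd : Complex.normSq d = Ny⁻¹ := by
      rw [hddef, Complex.normSq_ofReal, ← mul_inv, Real.mul_self_sqrt hNy.le]
    have hxu : ∑ i, Complex.normSq ((c • x) i) = 1 := by
      rw [sum_normSq_smul, hc, ← hNxdef, inv_mul_cancel₀ hNx.ne']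
    have hyu : ∑ k, Complex.normSq ((d • y) k) = 1 := by
      rw [sum_normSq_smul, hd, ← hNydef, inv_mul_cancel₀ hNy.ne']
    have hmem : δ ≤ Sval P Q (c • x) (d • y) :=
      hδ.2 ⟨c • x, d • y, hxu, hyu, hbqf _ _⟩
    rw [Sval_smul, hc, hd] at hmem
    have h3 : (Nx⁻¹ * Ny⁻¹ * Sval P Q x y) * (Nx * Ny) = Sval P Q x y := by
      field_simp
    have h2 : δ * (Nx * Ny) ≤ Sval P Q x y := by
      rw [← h3]
      exact mul_le_mul_of_nonneg_right hmem (by positivity)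
    have h4 : ε * (Nx * Ny) ≤ δ * (Nx * Ny) :=
      mul_le_mul_of_nonneg_right hεδ (by positivity)
    linarith
  · -- part (b)
    rintro ⟨Q', R', hQ', hR', heq⟩
    have hρP : ρ * P = 0 := by
      ext i j
      have h0 : (ρ * P) *ᵥ Pi.single j 1 = 0 := by
        rw [← mulVec_mulVec]
        exact (hP3 _).mp (by rw [mulVec_mulVec, hP2])
      rw [mulVec_single] at h0
      have := congrFun h0 i
      simpa using this
    have hρQΓ : pt ρ * Q = 0 := by
      ext i j
      have h0 : (pt ρ * Q) *ᵥ Pi.single j 1 = 0 := by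
        rw [← mulVec_mulVec]
        exact (hQ3 _).mp (by rw [mulVec_mulVec, hQ2])
      rw [mulVec_single] at h0
      have := congrFun h0 i
      simpa using this
    have hεt : (0:ℂ) < (ε:ℂ) * ρ.trace :=
      mul_pos (Complex.zero_lt_real.mpr hε) (psd_trace_pos hρ hρne)
    have hTL : ((P + pt Q - (ε:ℂ) • 1) * ρ).trace = -((ε:ℂ) * ρ.trace) := by
      have t1 : (P * ρ).trace = 0 := by rw [trace_mul_comm, hρP, trace_zero]
      have t2 : (pt Q * ρ).trace = 0 := by
        rw [trace_pt_mul, trace_mul_comm, hρQΓ, trace_zero]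
      have t3 : ((((ε:ℂ) • (1 : Matrix (Fin m × Fin n) (Fin m × Fin n) ℂ))) * ρ).trace
          = (ε:ℂ) * ρ.trace := by
        rw [smul_mul_assoc, one_mul, trace_smul, smul_eq_mul]
      rw [sub_mul, add_mul, trace_sub, trace_add, t1, t2, t3]
      ring
    have hTR : 0 ≤ ((Q' + pt R') * ρ).trace := by
      rw [add_mul, trace_add]
      refine add_nonneg (psd_mul_trace_nonneg hQ' hρ) ?_
      rw [trace_pt_mul]
      exact psd_mul_trace_nonneg hR' hρΓ
    rw [heq] at hTL
    rw [hTL] at hTR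
    have hle : (ε:ℂ) * ρ.trace ≤ 0 := neg_nonneg.mp hTR
    exact LT.lt.not_ge hεt hle
end

section
/- Let S ∈ M_4(ℂ) be the cyclic shift matrix with entries S_{i,j} = 1 if i ≡ j + 1 (mod 4) and 0 otherwise, and for X ∈ M_4(ℂ) let ε(X) denote the diagonal part of X (the diagonal matrix with the same diagonal entries as X). Define τ : M_4(ℂ) → M_4(ℂ) by τ(X) = 3·ε(X) + ε(S X Sᴴ) − X; explicitly, τ(X) has diagonal entries (τX)_{ii} = 2·x_{ii} + x_{i−1,i−1} (indices mod 4) and off-diagonal entries (τX)_{ij} = −x_{ij} for i ≠ j. Then τ is a positive map: τ(A) is positive semidefinite for every positive semidefinite A ∈ M_4(ℂ). -/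
private lemma Hlem (t0 t1 t2 t3 : ℝ) (h0 : 0 < t0) (h1 : 0 < t1) (h2 : 0 < t2) (h3 : 0 < t3) :
    t0*((3*t1+t0)*(3*t2+t1)*(3*t3+t2)) + t1*((3*t0+t3)*((3*t2+t1)*(3*t3+t2)))
      + t2*((3*t0+t3)*((3*t1+t0)*(3*t3+t2))) + t3*((3*t0+t3)*((3*t1+t0)*(3*t2+t1)))
      ≤ (3*t0+t3)*((3*t1+t0)*((3*t2+t1)*(3*t3+t2))) := by
  rw [← sub_nonneg]
  have hS : (0:ℝ) < t0+t1+t2+t3 := by linarith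
  have hid : (t0+t1+t2+t3) * ((3*t0+t3)*((3*t1+t0)*((3*t2+t1)*(3*t3+t2)))
      - (t0*((3*t1+t0)*(3*t2+t1)*(3*t3+t2)) + t1*((3*t0+t3)*((3*t2+t1)*(3*t3+t2)))
      + t2*((3*t0+t3)*((3*t1+t0)*(3*t3+t2))) + t3*((3*t0+t3)*((3*t1+t0)*(3*t2+t1)))))
    = 7*(t0^2*t1)*(t2-t3)^2 + (t0^2*t2)*(t1-t2)^2 + (t0^2*t2)*(t1-t3)^2
      + 2*(t0^2*t2)*(t2-t3)^2 + 2*(t0^2*t3)*(t1-t2)^2 + 2*(t0*t1*t2)*(t0-t1)^2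
      + (t0*t1*t2)*(t1-t3)^2 + (t0*t1*t3)*(t0-t2)^2 + 2*(t0*t1*t3)*(t0-t3)^2
      + (t0*t2*t3)*(t1-t3)^2 + 2*(t0*t2*t3)*(t2-t3)^2 + (t0*t2^2)*(t0-t1)^2
      + 2*(t0*t2^2)*(t0-t3)^2 + 2*(t0*t1^2)*(t2-t3)^2 + 7*(t0*t3^2)*(t1-t2)^2
      + 7*(t1^2*t2)*(t0-t3)^2 + (t1^2*t3)*(t0-t2)^2 + (t1*t2*t3)*(t0-t2)^2
      + 2*(t1*t2*t3)*(t1-t2)^2 + 2*(t1*t2^2)*(t0-t3)^2 + 2*(t1*t3^2)*(t0-t1)^2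
      + (t1*t3^2)*(t1-t2)^2 + 8*(t2^2*t3)*(t0-t1)^2 + 3*t3*(t0*t2-t1*t3)^2 := by
    ring
  have hnn : 0 ≤ (t0+t1+t2+t3) * ((3*t0+t3)*((3*t1+t0)*((3*t2+t1)*(3*t3+t2)))
      - (t0*((3*t1+t0)*(3*t2+t1)*(3*t3+t2)) + t1*((3*t0+t3)*((3*t2+t1)*(3*t3+t2)))
      + t2*((3*t0+t3)*((3*t1+t0)*(3*t3+t2))) + t3*((3*t0+t3)*((3*t1+t0)*(3*t2+t1))))) := by
    rw [hid]; positivity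
  exact nonneg_of_mul_nonneg_right hnn hS

private lemma CSlem (d0 d1 d2 d3 c0 c1 c2 c3 u0 u1 u2 u3 : ℝ)
    (hd0 : 0 ≤ d0) (hd1 : 0 ≤ d1) (hd2 : 0 ≤ d2) (hd3 : 0 ≤ d3) :
    (c0*u0+c1*u1+c2*u2+c3*u3)^2*(d0*(d1*(d2*d3)))
      ≤ (c0^2*(d1*(d2*d3))+c1^2*(d0*(d2*d3))+c2^2*(d0*(d1*d3))+c3^2*(d0*(d1*d2)))
        * (d0*u0^2+d1*u1^2+d2*u2^2+d3*u3^2) := by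
  nlinarith [mul_nonneg (mul_nonneg hd2 hd3) (sq_nonneg (c0*u1*d1 - c1*u0*d0)),
    mul_nonneg (mul_nonneg hd1 hd3) (sq_nonneg (c0*u2*d2 - c2*u0*d0)),
    mul_nonneg (mul_nonneg hd1 hd2) (sq_nonneg (c0*u3*d3 - c3*u0*d0)),
    mul_nonneg (mul_nonneg hd0 hd3) (sq_nonneg (c1*u2*d2 - c2*u1*d1)),
    mul_nonneg (mul_nonneg hd0 hd2) (sq_nonneg (c1*u3*d3 - c3*u1*d1)),
    mul_nonneg (mul_nonneg hd0 hd1) (sq_nonneg (c2*u3*d3 - c3*u2*d2))]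

set_option maxHeartbeats 1000000 in
private lemma key (c0 c1 c2 c3 u0 u1 u2 u3 : ℝ)
    (hc0 : 0 ≤ c0) (hc1 : 0 ≤ c1) (hc2 : 0 ≤ c2) (hc3 : 0 ≤ c3) :
    (c0*u0+c1*u1+c2*u2+c3*u3)^2
      ≤ (3*c0^2+c3^2)*u0^2+(3*c1^2+c0^2)*u1^2+(3*c2^2+c1^2)*u2^2+(3*c3^2+c2^2)*u3^2 := by
  rcases eq_or_lt_of_le hc0 with h0|h0
  · subst h0
    nlinarith [sq_nonneg (c1*u1-c2*u2), sq_nonneg (c1*u1-c3*u3), sq_nonneg (c2*u2-c3*u3),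
      sq_nonneg (c3*u0), sq_nonneg (c1*u2), sq_nonneg (c2*u3)]
  rcases eq_or_lt_of_le hc1 with h1|h1
  · subst h1
    nlinarith [sq_nonneg (c0*u0-c2*u2), sq_nonneg (c0*u0-c3*u3), sq_nonneg (c2*u2-c3*u3),
      sq_nonneg (c0*u1), sq_nonneg (c2*u3), sq_nonneg (c3*u0)]
  rcases eq_or_lt_of_le hc2 with h2|h2
  · subst h2
    nlinarith [sq_nonneg (c0*u0-c1*u1), sq_nonneg (c0*u0-c3*u3), sq_nonneg (c1*u1-c3*u3),
      sq_nonneg (c0*u1), sq_nonneg (c1*u2), sq_nonneg (c3*u0)]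
  rcases eq_or_lt_of_le hc3 with h3|h3
  · subst h3
    nlinarith [sq_nonneg (c0*u0-c1*u1), sq_nonneg (c0*u0-c2*u2), sq_nonneg (c1*u1-c2*u2),
      sq_nonneg (c0*u1), sq_nonneg (c1*u2), sq_nonneg (c2*u3)]
  -- all positive
  have hH := Hlem (c0^2) (c1^2) (c2^2) (c3^2) (by positivity) (by positivity) (by positivity)
    (by positivity)
  have hCS := CSlem (3*c0^2+c3^2) (3*c1^2+c0^2) (3*c2^2+c1^2) (3*c3^2+c2^2) c0 c1 c2 c3 u0 u1 u2 u3
    (by positivity) (by positivity) (by positivity) (by positivity)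
  have hY : (0:ℝ) ≤ (3*c0^2+c3^2)*u0^2+(3*c1^2+c0^2)*u1^2+(3*c2^2+c1^2)*u2^2+(3*c3^2+c2^2)*u3^2 :=
    by positivity
  have hD : (0:ℝ) < (3*c0^2+c3^2)*((3*c1^2+c0^2)*((3*c2^2+c1^2)*(3*c3^2+c2^2))) := by positivity
  have step2 := mul_le_mul_of_nonneg_right hH hY
  have step3 : (c0*u0+c1*u1+c2*u2+c3*u3)^2
        * ((3*c0^2+c3^2)*((3*c1^2+c0^2)*((3*c2^2+c1^2)*(3*c3^2+c2^2))))
      ≤ ((3*c0^2+c3^2)*u0^2+(3*c1^2+c0^2)*u1^2+(3*c2^2+c1^2)*u2^2+(3*c3^2+c2^2)*u3^2)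
        * ((3*c0^2+c3^2)*((3*c1^2+c0^2)*((3*c2^2+c1^2)*(3*c3^2+c2^2)))) := by
    linarith [hCS, step2]
  exact le_of_mul_le_mul_right step3 hD

open Matrix
open scoped ComplexOrder

private lemma conj_mul_self (z : ℂ) :
    (starRingEnd ℂ) z * z = ((‖z‖ : ℝ) : ℂ)^2 := by
  rw [mul_comm, Complex.mul_conj, Complex.normSq_eq_norm_sq]
  push_cast
  ring

open scoped MatrixOrder in
private lemma psd_eq_ctm (A : Matrix (Fin 4) (Fin 4) ℂ) (hA : A.PosSemidef) :
    ∃ B : Matrix (Fin 4) (Fin 4) ℂ, A = Bᴴ * B :=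
  CStarAlgebra.nonneg_iff_eq_star_mul_self.mp hA.nonneg

theorem stmt_18 (τ : Matrix (Fin 4) (Fin 4) ℂ → Matrix (Fin 4) (Fin 4) ℂ)
    (hτ : ∀ X, τ X = Matrix.of fun i j : Fin 4 =>
      if i = j then 2 * X i i + X (i - 1) (i - 1) else - X i j) :
    ∀ A : Matrix (Fin 4) (Fin 4) ℂ, A.PosSemidef → (τ A).PosSemidef := by
  intro A hA
  obtain ⟨B, hB⟩ : ∃ B : Matrix (Fin 4) (Fin 4) ℂ, A = Bᴴ * B :=
    psd_eq_ctm A hA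
  set f : Fin 4 → EuclideanSpace ℂ (Fin 4) := fun i => WithLp.toLp 2 (fun k => B k i) with hf
  set c : Fin 4 → ℝ := fun i => ‖f i‖ with hc
  have hinner : ∀ i j, A i j = (inner ℂ (f i) (f j) : ℂ) := by
    intro i j
    rw [hB, Matrix.mul_apply]
    simp [PiLp.inner_apply, RCLike.inner_apply, Matrix.conjTranspose_apply, hf, mul_comm]
  have hdiag : ∀ i, A i i = (((c i : ℝ)) : ℂ)^2 := by
    intro i
    rw [hinner i i, inner_self_eq_norm_sq_to_K]
    simp [hc]
  have hcij : ∀ i j, ‖A i j‖ ≤ c i * c j := by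
    intro i j
    rw [hinner]
    exact norm_inner_le_norm _ _
  have hcnn : ∀ i, 0 ≤ c i := fun i => norm_nonneg _
  have hDA : τ A = Matrix.diagonal (fun i => 3 * A i i + A (i-1) (i-1)) - A := by
    rw [hτ]
    ext i j
    by_cases h : i = j
    · subst h
      simp [Matrix.diagonal]
      ring
    · simp [Matrix.diagonal, h, Ne.symm h]
  rw [hDA]
  have hdself : Matrix.IsHermitian
      (Matrix.diagonal (fun i : Fin 4 => 3 * A i i + A (i-1) (i-1))) := by
    refine Matrix.isHermitian_diagonal_of_self_adjoint _ ?_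
    funext i
    simp only [Pi.star_apply, star_add, star_mul', hA.1.apply]
    simp [hA.1.apply]
  rw [Matrix.posSemidef_iff_dotProduct_mulVec]
  constructor
  · exact hdself.sub hA.1
  · intro x
    set u : Fin 4 → ℝ := fun i => ‖x i‖ with hu
    have hr := hA.dotProduct_mulVec_nonneg x
    rw [Complex.nonneg_iff] at hr
    rw [Matrix.sub_mulVec, dotProduct_sub]
    have hDsum : star x ⬝ᵥ (Matrix.diagonal (fun i : Fin 4 => 3 * A i i + A (i-1) (i-1))) *ᵥ x
        = (((3*(c 0)^2+(c 3)^2)*(u 0)^2+(3*(c 1)^2+(c 0)^2)*(u 1)^2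
            +(3*(c 2)^2+(c 1)^2)*(u 2)^2+(3*(c 3)^2+(c 2)^2)*(u 3)^2 : ℝ) : ℂ) := by
      simp only [dotProduct, Matrix.mulVec_diagonal, Fin.sum_univ_four, Pi.star_apply,
        Complex.star_def, show (0:Fin 4)-1 = 3 by decide, show (1:Fin 4)-1 = 0 by decide,
        show (2:Fin 4)-1 = 1 by decide, show (3:Fin 4)-1 = 2 by decide,
        hdiag 0, hdiag 1, hdiag 2, hdiag 3]
      push_cast
      linear_combination (3*((c 0 : ℝ):ℂ)^2+((c 3 : ℝ):ℂ)^2) * conj_mul_self (x 0)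
        + (3*((c 1 : ℝ):ℂ)^2+((c 0 : ℝ):ℂ)^2) * conj_mul_self (x 1)
        + (3*((c 2 : ℝ):ℂ)^2+((c 1 : ℝ):ℂ)^2) * conj_mul_self (x 2)
        + (3*((c 3 : ℝ):ℂ)^2+((c 2 : ℝ):ℂ)^2) * conj_mul_self (x 3)
    rw [hDsum]
    have habs : ‖star x ⬝ᵥ A *ᵥ x‖ ≤ ∑ i, u i * ∑ j, (c i * c j) * u j := by
      rw [dotProduct]
      refine (norm_sum_le _ _).trans (Finset.sum_le_sum fun i _ => ?_)
      rw [norm_mul]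
      have hxi : ‖(star x) i‖ = u i := by
        simp [hu, Pi.star_apply]
      rw [hxi]
      have hAvi : ‖(A *ᵥ x) i‖ ≤ ∑ j, (c i * c j) * u j := by
        simp only [Matrix.mulVec, dotProduct]
        refine (norm_sum_le _ _).trans (Finset.sum_le_sum fun j _ => ?_)
        rw [norm_mul]
        exact mul_le_mul (hcij i j) le_rfl (norm_nonneg _)
          (mul_nonneg (hcnn i) (hcnn j))
      exact mul_le_mul_of_nonneg_left hAvi (norm_nonneg _)
    have habs2 : (∑ i, u i * ∑ j, (c i * c j) * u j : ℝ)
        = (c 0 * u 0 + c 1 * u 1 + c 2 * u 2 + c 3 * u 3)^2 := by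
      simp [Fin.sum_univ_four]
      ring
    have hkey := key (c 0) (c 1) (c 2) (c 3) (u 0) (u 1) (u 2) (u 3)
      (hcnn 0) (hcnn 1) (hcnn 2) (hcnn 3)
    have hre : (star x ⬝ᵥ A *ᵥ x).re
        ≤ (3*(c 0)^2+(c 3)^2)*(u 0)^2+(3*(c 1)^2+(c 0)^2)*(u 1)^2
            +(3*(c 2)^2+(c 1)^2)*(u 2)^2+(3*(c 3)^2+(c 2)^2)*(u 3)^2 := by
      have h1 := Complex.re_le_norm (star x ⬝ᵥ A *ᵥ x)
      rw [habs2] at habs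
      linarith
    rw [Complex.le_def]
    constructor
    · simp only [Complex.zero_re, Complex.sub_re, Complex.ofReal_re]
      linarith
    · simp only [Complex.zero_im, Complex.sub_im, Complex.ofReal_im]
      linarith [hr.2]
end
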